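/- Let n ≥ 2 particles sit at distinct points x_1, …, x_n on the unit circle S¹ (in cyclic order), and suppose each particle is in equilibrium under the tangential components of pairwise forces, where the force magnitude between two particles is F(d) for their (arc-length) distance d, with F strictly decreasing and positive. Then the arc-length distance between consecutive particles d(x_i, x_{i+1 mod n}) is the same for all i (equal to 2π/n). -/

import Mathlib

open Real

/-- The signed tangential force exerted on a particle by another particle lying at
angular displacement `δ ∈ (0, 2π)` counterclockwise from it: the particle is pushed
along the shorter arc away from the other particle. -/
noncomputable def tangForce (F : ℝ → ℝ) (δ : ℝ) : ℝ :=
  if δ < π then -F δ else if π < δ then F (2 * π - δ) else 0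

/-- The angular displacement in `(0, 2π)` from `a` to `b`, for angles `a ≠ b` in `[0, 2π)`. -/
noncomputable def angDisp (a b : ℝ) : ℝ :=
  if a < b then b - a else b - a + 2 * π

namespace Stmt3Aux

open Finset

lemma tangForce_lt (F : ℝ → ℝ) (hFpos : ∀ d, 0 < d → 0 < F d)
    (hFanti : ∀ a b, 0 < a → a < b → F b < F a)
    {B A : ℝ} (hB : 0 < B) (hBA : B < A) (hA : A < 2 * π) :
    tangForce F B < tangForce F A := by
  have hπ := Real.pi_pos
  unfold tangForce
  rcases lt_trichotomy A π with h1 | h1 | h1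
  · rw [if_pos (hBA.trans h1), if_pos h1]
    have := hFanti B A hB hBA
    linarith
  · subst h1
    rw [if_pos hBA, if_neg (lt_irrefl _), if_neg (lt_irrefl _)]
    have := hFpos B hB
    linarith
  · rw [if_neg (not_lt.2 h1.le), if_pos h1]
    have hFA : 0 < F (2 * π - A) := hFpos _ (by linarith)
    rcases lt_trichotomy B π with h2 | h2 | h2
    · rw [if_pos h2]
      have := hFpos B hB
      linarith
    · subst h2
      rw [if_neg (lt_irrefl _), if_neg (lt_irrefl _)]
      linarith
    · rw [if_neg (not_lt.2 h2.le), if_pos h2]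
      exact hFanti (2 * π - A) (2 * π - B) (by linarith) (by linarith)

lemma tangForce_le (F : ℝ → ℝ) (hFpos : ∀ d, 0 < d → 0 < F d)
    (hFanti : ∀ a b, 0 < a → a < b → F b < F a)
    {B A : ℝ} (hB : 0 < B) (hBA : B ≤ A) (hA : A < 2 * π) :
    tangForce F B ≤ tangForce F A := by
  rcases eq_or_lt_of_le hBA with h | h
  · rw [h]
  · exact (tangForce_lt F hFpos hFanti hB h hA).le

lemma tangForce_flip (F : ℝ → ℝ) {B : ℝ} (hB : 0 < B) (hB2 : B < 2 * π) :
    tangForce F (2 * π - B) = - tangForce F B := by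
  have hπ := Real.pi_pos
  unfold tangForce
  rcases lt_trichotomy B π with h | h | h
  · rw [if_neg (by linarith), if_pos (by linarith), if_pos h]
    ring_nf
  · subst h
    rw [show (2:ℝ) * π - π = π by ring, if_neg (lt_irrefl _), if_neg (lt_irrefl _),
      if_neg (lt_irrefl _), if_neg (lt_irrefl _)]
    norm_num
  · rw [if_pos (by linarith), if_neg (not_lt.2 h.le), if_pos h]

/-- Lift of the angles to a ℤ-indexed increasing sequence. -/
noncomputable def Theta (θ : ℕ → ℝ) (n : ℕ) (k : ℤ) : ℝ :=
  θ (k % (n : ℤ)).toNat + 2 * π * ((k / (n : ℤ) : ℤ) : ℝ)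

noncomputable def uu (θ : ℕ → ℝ) (n : ℕ) (k : ℤ) : ℝ :=
  Theta θ n k - 2 * π / (n : ℝ) * k

section

variable {θ : ℕ → ℝ} {n : ℕ}

lemma decomp (hn : 2 ≤ n) (k : ℤ) :
    ∃ q r : ℤ, 0 ≤ r ∧ r < n ∧ k = (n : ℤ) * q + r := by
  have hn0 : (0 : ℤ) < (n : ℤ) := by exact_mod_cast (by omega : 0 < n)
  exact ⟨k / n, k % n, Int.emod_nonneg k (by omega), Int.emod_lt_of_pos k hn0,
    (Int.mul_ediv_add_emod k n).symm⟩

lemma Theta_spec (hn : 2 ≤ n) (q r : ℤ) (hr0 : 0 ≤ r) (hrn : r < n) :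
    Theta θ n ((n : ℤ) * q + r) = θ r.toNat + 2 * π * q := by
  have hn0 : (n : ℤ) ≠ 0 := by exact_mod_cast (by omega : n ≠ 0)
  have h1 : ((n : ℤ) * q + r) % (n : ℤ) = r := by
    rw [add_comm, Int.add_mul_emod_self_left, Int.emod_eq_of_lt hr0 hrn]
  have h2 : ((n : ℤ) * q + r) / (n : ℤ) = q := by
    rw [add_comm, Int.add_mul_ediv_left r q hn0, Int.ediv_eq_zero_of_lt hr0 hrn, zero_add]
  rw [Theta, h1, h2]

lemma Theta_of_lt (hn : 2 ≤ n) (a : ℕ) (ha : a < n) : Theta θ n a = θ a := by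
  have := Theta_spec (θ := θ) hn 0 a (by positivity) (by exact_mod_cast ha)
  simpa using this

lemma Theta_lt_succ (hn : 2 ≤ n) (hrange : ∀ i < n, θ i ∈ Set.Ico 0 (2 * π))
    (hsorted : ∀ i j, i < j → j < n → θ i < θ j) (k : ℤ) :
    Theta θ n k < Theta θ n (k + 1) := by
  obtain ⟨q, r, hr0, hrn, hk⟩ := decomp hn k
  have e1 : Theta θ n k = θ r.toNat + 2 * π * q := by rw [hk]; exact Theta_spec hn q r hr0 hrn
  rcases lt_or_eq_of_le (by omega : r + 1 ≤ (n : ℤ)) with h | h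
  · have e2 : Theta θ n (k + 1) = θ (r + 1).toNat + 2 * π * q := by
      have hk1 : k + 1 = (n : ℤ) * q + (r + 1) := by rw [hk]; ring
      rw [hk1]; exact Theta_spec hn q (r + 1) (by omega) h
    rw [e1, e2]
    have htn : (r + 1).toNat = r.toNat + 1 := by omega
    have : θ r.toNat < θ (r.toNat + 1) := by
      apply hsorted _ _ (Nat.lt_succ_self _)
      omega
    rw [htn]
    linarith
  · have e2 : Theta θ n (k + 1) = θ 0 + 2 * π * ((q + 1 : ℤ) : ℝ) := by
      have hk1 : k + 1 = (n : ℤ) * (q + 1) + 0 := by rw [hk]; ring_nf; linarith [h]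
      rw [hk1]
      simpa using Theta_spec (θ := θ) hn (q + 1) 0 le_rfl (by omega)
    rw [e1, e2]
    have h1 : θ r.toNat < 2 * π := (hrange r.toNat (by omega)).2
    have h2 : 0 ≤ θ 0 := (hrange 0 (by omega)).1
    push_cast
    linarith

lemma Theta_strictMono (hn : 2 ≤ n) (hrange : ∀ i < n, θ i ∈ Set.Ico 0 (2 * π))
    (hsorted : ∀ i j, i < j → j < n → θ i < θ j) :
    StrictMono (Theta θ n) :=
  strictMono_int_of_lt_succ (Theta_lt_succ hn hrange hsorted)

lemma Theta_add_n (hn : 2 ≤ n) (k : ℤ) : Theta θ n (k + n) = Theta θ n k + 2 * π := by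
  obtain ⟨q, r, hr0, hrn, hk⟩ := decomp hn k
  have e1 : Theta θ n k = θ r.toNat + 2 * π * q := by rw [hk]; exact Theta_spec hn q r hr0 hrn
  have e2 : Theta θ n (k + n) = θ r.toNat + 2 * π * ((q + 1 : ℤ) : ℝ) := by
    have hk1 : k + (n : ℤ) = (n : ℤ) * (q + 1) + r := by rw [hk]; ring
    rw [hk1]; exact Theta_spec hn (q + 1) r hr0 hrn
  rw [e1, e2]
  push_cast
  ring

lemma uu_add_n (hn : 2 ≤ n) (k : ℤ) : uu θ n (k + n) = uu θ n k := by
  have hn0 : (n : ℝ) ≠ 0 := Nat.cast_ne_zero.mpr (by omega)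
  unfold uu
  rw [Theta_add_n hn]
  push_cast
  field_simp
  ring

lemma uu_period (hn : 2 ≤ n) (k m : ℤ) : uu θ n (k + (n : ℤ) * m) = uu θ n k := by
  induction m using Int.induction_on with
  | zero => simp
  | succ m ih =>
      have : k + (n : ℤ) * (m + 1) = (k + (n : ℤ) * m) + n := by ring
      rw [this, uu_add_n hn, ih]
  | pred m ih =>
      have : k + (n : ℤ) * (-m - 1) + (n : ℤ) = k + (n : ℤ) * (-m) := by ring
      have h2 := uu_add_n (θ := θ) hn (k + (n : ℤ) * (-m - 1))
      rw [this] at h2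
      rw [h2.symm.trans ih]

lemma uu_mod (hn : 2 ≤ n) (k : ℤ) : uu θ n k = uu θ n (k % n) := by
  have : k = k % n + (n : ℤ) * (k / n) := by
    rw [add_comm]; exact (Int.mul_ediv_add_emod k n).symm
  conv_lhs => rw [this]
  rw [uu_period hn]

lemma mod_small {n : ℕ} (hn : 0 < n) (a : ℕ) (h : a < 2 * n) :
    a % n = if a < n then a else a - n := by
  split
  · exact Nat.mod_eq_of_lt ‹_›
  · rw [Nat.mod_eq_sub_mod (le_of_not_gt ‹_›), Nat.mod_eq_of_lt (by omega)]

lemma sum_reindex (F : ℝ → ℝ) (hn : 2 ≤ n)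
    (hsorted : ∀ i j, i < j → j < n → θ i < θ j)
    (i' : ℕ) (hi' : i' < n) :
    ∑ j ∈ (Finset.range n).erase i', tangForce F (angDisp (θ i') (θ j)) =
      ∑ k ∈ Finset.Ico 1 n, tangForce F (Theta θ n ((i' : ℤ) + (k : ℕ)) - Theta θ n (i' : ℤ)) := by
  have hn0 : 0 < n := by omega
  refine (Finset.sum_nbij' (fun k => (i' + k) % n) (fun j => (j + n - i') % n)
    ?_ ?_ ?_ ?_ ?_).symm
  · intro k hk
    simp only [mem_Ico] at hk
    simp only [mem_erase, mem_range]
    rw [mod_small hn0 _ (by omega)]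
    split_ifs <;> omega
  · intro j hj
    simp only [mem_erase, mem_range] at hj
    simp only [mem_Ico]
    rw [mod_small hn0 _ (by omega)]
    split_ifs <;> omega
  · intro k hk
    simp only [mem_Ico] at hk
    rw [mod_small hn0 (i' + k) (by omega)]
    split_ifs with h1
    · rw [mod_small hn0 _ (by omega)]
      split_ifs <;> omega
    · rw [mod_small hn0 _ (by omega)]
      split_ifs <;> omega
  · intro j hj
    simp only [mem_erase, mem_range] at hj
    rw [mod_small hn0 (j + n - i') (by omega)]
    split_ifs with h1
    · rw [mod_small hn0 _ (by omega)]
      split_ifs <;> omega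
    · rw [mod_small hn0 _ (by omega)]
      split_ifs <;> omega
  · intro k hk
    simp only [mem_Ico] at hk
    congr 1
    rw [mod_small hn0 (i' + k) (by omega)]
    split_ifs with h1
    · rw [angDisp, if_pos (hsorted i' (i' + k) (by omega) h1)]
      have e1 : ((i' : ℤ) + (k : ℕ)) = ((i' + k : ℕ) : ℤ) := by push_cast; ring
      rw [e1, Theta_of_lt hn (i' + k) h1, Theta_of_lt hn i' hi']
    · have hjlt : i' + k - n < i' := by omega
      rw [angDisp, if_neg (not_lt.2 (hsorted (i' + k - n) i' hjlt hi').le)]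
      have e1 : ((i' : ℤ) + (k : ℕ)) = ((i' + k - n : ℕ) : ℤ) + (n : ℕ) := by omega
      rw [e1, Theta_add_n hn, Theta_of_lt hn (i' + k - n) (hjlt.trans hi'), Theta_of_lt hn i' hi']
      ring

end
end Stmt3Aux

open Stmt3Aux Finset in
/-- `n ≥ 2` particles on the unit circle, in cyclic order, in equilibrium under
pairwise tangential forces of magnitude `F` of the arc-length distance, are equally
spaced: every gap between consecutive particles equals `2π/n`. -/
theorem stmt_3 (F : ℝ → ℝ)
    (hFpos : ∀ d, 0 < d → 0 < F d)
    (hFanti : ∀ a b, 0 < a → a < b → F b < F a)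
    (n : ℕ) (hn : 2 ≤ n) (θ : ℕ → ℝ)
    (hrange : ∀ i < n, θ i ∈ Set.Ico 0 (2 * π))
    (hsorted : ∀ i j, i < j → j < n → θ i < θ j)
    (heq : ∀ i < n, ∑ j ∈ (Finset.range n).erase i, tangForce F (angDisp (θ i) (θ j)) = 0) :
    (∀ i, i + 1 < n → θ (i + 1) - θ i = 2 * π / n) ∧
      θ 0 + 2 * π - θ (n - 1) = 2 * π / n := by
  classical
  have hπ := Real.pi_pos
  have hn0 : (n : ℝ) ≠ 0 := Nat.cast_ne_zero.mpr (by omega)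
  have hnZ : (n : ℤ) ≠ 0 := by exact_mod_cast (by omega : n ≠ 0)
  have hnZ0 : (0 : ℤ) < (n : ℤ) := by exact_mod_cast (by omega : 0 < n)
  have hmono := Theta_strictMono (θ := θ) hn hrange hsorted
  have hne : (Finset.range n).Nonempty := ⟨0, Finset.mem_range.mpr (by omega)⟩
  have himgne : ((Finset.range n).image (fun a : ℕ => uu θ n (a : ℤ))).Nonempty :=
    hne.image _
  set m := ((Finset.range n).image (fun a : ℕ => uu θ n (a : ℤ))).min' himgne with hmdef
  have hm_le : ∀ a : ℕ, a < n → m ≤ uu θ n a := fun a ha =>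
    Finset.min'_le _ _ (Finset.mem_image_of_mem _ (Finset.mem_range.mpr ha))
  have hm_ex : ∃ a, a < n ∧ uu θ n a = m := by
    obtain ⟨a, ha, hav⟩ := Finset.mem_image.mp (Finset.min'_mem _ himgne)
    exact ⟨a, Finset.mem_range.mp ha, hav⟩
  have hm_all : ∀ k : ℤ, m ≤ uu θ n k := by
    intro k
    rw [uu_mod hn k]
    have h0 : 0 ≤ k % (n : ℤ) := Int.emod_nonneg k hnZ
    have h1 : k % (n : ℤ) < n := Int.emod_lt_of_pos k hnZ0
    have h2 : ((k % (n : ℤ)).toNat : ℤ) = k % n := Int.toNat_of_nonneg h0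
    rw [← h2]
    exact hm_le _ (by omega)
  have hconst : ∀ a : ℕ, a < n → uu θ n a = m := by
    by_contra hcon
    push_neg at hcon
    obtain ⟨a, ha, hane⟩ := hcon
    have ham : m < uu θ n a := lt_of_le_of_ne (hm_le a ha) (Ne.symm hane)
    set T := (Finset.Icc 1 n).filter (fun k : ℕ => uu θ n ((a : ℤ) + k) = m) with hT
    have hTne : T.Nonempty := by
      obtain ⟨b, hb, hbm⟩ := hm_ex
      by_cases hba : a < b
      · refine ⟨b - a, ?_⟩
        rw [hT, Finset.mem_filter, Finset.mem_Icc]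
        refine ⟨⟨by omega, by omega⟩, ?_⟩
        have e : (a : ℤ) + ((b - a : ℕ) : ℤ) = b := by omega
        rw [e]; exact hbm
      · refine ⟨b + n - a, ?_⟩
        rw [hT, Finset.mem_filter, Finset.mem_Icc]
        refine ⟨⟨by omega, by omega⟩, ?_⟩
        have e : (a : ℤ) + ((b + n - a : ℕ) : ℤ) = (b : ℤ) + (n : ℤ) := by omega
        rw [e, uu_add_n hn]; exact hbm
    set k₀ := T.min' hTne with hk0
    have hk₀T : k₀ ∈ T := T.min'_mem hTne
    rw [hT, Finset.mem_filter, Finset.mem_Icc] at hk₀T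
    obtain ⟨⟨hk1, hk2⟩, hkm⟩ := hk₀T
    set i : ℤ := (a : ℤ) + (k₀ : ℕ) with hidef
    have hui : uu θ n i = m := hkm
    have hprev : m < uu θ n (i - 1) := by
      rcases eq_or_lt_of_le hk1 with h1 | h1
      · have e : i - 1 = (a : ℤ) := by omega
        rw [e]; exact ham
      · have hmem : k₀ - 1 ∈ Finset.Icc 1 n := Finset.mem_Icc.mpr ⟨by omega, by omega⟩
        have hnot : ¬ (uu θ n ((a : ℤ) + (k₀ - 1 : ℕ)) = m) := by
          intro hcontra
          have hle : k₀ ≤ k₀ - 1 :=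
            T.min'_le _ (by rw [hT, Finset.mem_filter]; exact ⟨hmem, hcontra⟩)
          omega
        have heqidx : (a : ℤ) + ((k₀ - 1 : ℕ) : ℤ) = i - 1 := by omega
        rw [heqidx] at hnot
        exact lt_of_le_of_ne (hm_all _) (Ne.symm hnot)
    -- the index i, reduced mod n
    set i' := (i % (n : ℤ)).toNat with hi'def
    have hi'raw0 : 0 ≤ i % (n : ℤ) := Int.emod_nonneg i hnZ
    have hi'rawn : i % (n : ℤ) < n := Int.emod_lt_of_pos i hnZ0
    have hi'n : i' < n := by omega
    have hi'eq : (i' : ℤ) = i % n := Int.toNat_of_nonneg hi'raw0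
    have hshift : ∀ k : ℤ, uu θ n ((i' : ℤ) + k) = uu θ n (i + k) := by
      intro k
      have e : i + k = ((i' : ℤ) + k) + (n : ℤ) * (i / n) := by
        rw [hi'eq]
        have := Int.mul_ediv_add_emod i (n : ℤ)
        linarith
      rw [e, uu_period hn]
    have hu0 : uu θ n (i' : ℤ) = uu θ n i := by simpa using hshift 0
    have hx : ∀ x : ℤ, Theta θ n x = uu θ n x + 2 * π / n * x := by
      intro x; rw [uu]; ring
    have hTdiff : ∀ k : ℤ,
        Theta θ n ((i' : ℤ) + k) - Theta θ n (i' : ℤ) = Theta θ n (i + k) - Theta θ n i := by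
      intro k
      rw [hx ((i' : ℤ) + k), hx (i' : ℤ), hx (i + k), hx i, hshift k, hu0]
      push_cast
      ring
    -- force balance at i, in ℤ coordinates
    have hbal : ∑ k ∈ Finset.Ico 1 n, tangForce F (Theta θ n (i + (k : ℕ)) - Theta θ n i)
        = 0 := by
      have h1 := sum_reindex (θ := θ) F hn hsorted i' hi'n
      rw [heq i' hi'n] at h1
      rw [Finset.sum_congr rfl
        (fun k _ => by rw [hTdiff (k : ℕ)])] at h1
      exact h1.symm
    -- basic bounds
    have hA0 : ∀ k : ℕ, 1 ≤ k → 0 < Theta θ n (i + (k : ℕ)) - Theta θ n i := by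
      intro k hk
      have : Theta θ n i < Theta θ n (i + k) := hmono (by omega)
      linarith
    have hA2 : ∀ k : ℕ, k < n → Theta θ n (i + (k : ℕ)) - Theta θ n i < 2 * π := by
      intro k hk
      have h1 : Theta θ n (i + k) < Theta θ n (i + n) := hmono (by omega)
      rw [Theta_add_n hn] at h1
      linarith
    have hB0 : ∀ k : ℕ, 1 ≤ k → 0 < Theta θ n i - Theta θ n (i - (k : ℕ)) := by
      intro k hk
      have : Theta θ n (i - k) < Theta θ n i := hmono (by omega)
      linarith
    have hB2 : ∀ k : ℕ, k < n → Theta θ n i - Theta θ n (i - (k : ℕ)) < 2 * π := by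
      intro k hk
      have h1 : Theta θ n (i - n) < Theta θ n (i - k) := hmono (by omega)
      have h2 := Theta_add_n (θ := θ) hn (i - n)
      rw [show i - (n : ℤ) + n = i by ring] at h2
      linarith
    have hdiffBA : ∀ k : ℕ,
        (Theta θ n (i + (k : ℕ)) - Theta θ n i) - (Theta θ n i - Theta θ n (i - (k : ℕ)))
          = uu θ n (i + k) + uu θ n (i - k) - 2 * uu θ n i := by
      intro k
      rw [hx (i + k), hx (i - k), hx i]
      push_cast
      ring
    have hBA : ∀ k : ℕ,
        Theta θ n i - Theta θ n (i - (k : ℕ)) ≤ Theta θ n (i + (k : ℕ)) - Theta θ n i := by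
      intro k
      have h1 := hm_all (i + k)
      have h2 := hm_all (i - k)
      have h3 := hdiffBA k
      rw [hui] at h3
      linarith
    have hstrict :
        Theta θ n i - Theta θ n (i - ((1 : ℕ) : ℤ)) <
          Theta θ n (i + ((1 : ℕ) : ℤ)) - Theta θ n i := by
      have h1 := hm_all (i + 1)
      have h3 := hdiffBA 1
      rw [hui] at h3
      push_cast at h3 ⊢
      linarith
    have hpair : ∀ k : ℕ, 1 ≤ k → k < n →
        Theta θ n (i + ((n - k : ℕ) : ℤ)) - Theta θ n i
          = 2 * π - (Theta θ n i - Theta θ n (i - (k : ℕ))) := by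
      intro k hk1 hk2
      have e1 : i + ((n - k : ℕ) : ℤ) = (i - (k : ℕ)) + (n : ℤ) := by omega
      rw [e1, Theta_add_n hn]
      ring
    -- the paired sum
    have hbal2 : ∑ k ∈ Finset.Ico 1 n,
        tangForce F (Theta θ n (i + ((n - k : ℕ) : ℤ)) - Theta θ n i) = 0 := by
      rw [← hbal]
      refine Finset.sum_nbij' (fun k => n - k) (fun k => n - k) ?_ ?_ ?_ ?_ ?_
      · intro k hk; simp only [mem_Ico] at *; omega
      · intro k hk; simp only [mem_Ico] at *; omega
      · intro k hk; simp only [mem_Ico] at hk; omega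
      · intro k hk; simp only [mem_Ico] at hk; omega
      · intro k hk
        dsimp only
    have hterm_ge : ∀ k ∈ Finset.Ico 1 n, (0 : ℝ) ≤
        tangForce F (Theta θ n (i + (k : ℕ)) - Theta θ n i) +
          tangForce F (Theta θ n (i + ((n - k : ℕ) : ℤ)) - Theta θ n i) := by
      intro k hk
      simp only [mem_Ico] at hk
      rw [hpair k hk.1 hk.2, tangForce_flip F (hB0 k hk.1) (hB2 k hk.2)]
      have := tangForce_le F hFpos hFanti (hB0 k hk.1) (hBA k) (hA2 k hk.2)
      linarith
    have hterm_hi : (0 : ℝ) <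
        tangForce F (Theta θ n (i + ((1 : ℕ) : ℤ)) - Theta θ n i) +
          tangForce F (Theta θ n (i + ((n - 1 : ℕ) : ℤ)) - Theta θ n i) := by
      rw [hpair 1 le_rfl (by omega), tangForce_flip F (hB0 1 le_rfl) (hB2 1 (by omega))]
      have := tangForce_lt F hFpos hFanti (hB0 1 le_rfl) hstrict (hA2 1 (by omega))
      linarith
    have hsum_pos : (0 : ℝ) < ∑ k ∈ Finset.Ico 1 n,
        (tangForce F (Theta θ n (i + (k : ℕ)) - Theta θ n i) +
          tangForce F (Theta θ n (i + ((n - k : ℕ) : ℤ)) - Theta θ n i)) := by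
      have h := Finset.sum_lt_sum (s := Finset.Ico 1 n)
        (f := fun _ : ℕ => (0 : ℝ))
        (g := fun k : ℕ => tangForce F (Theta θ n (i + (k : ℕ)) - Theta θ n i) +
          tangForce F (Theta θ n (i + ((n - k : ℕ) : ℤ)) - Theta θ n i))
        hterm_ge ⟨1, Finset.mem_Ico.mpr ⟨le_rfl, by omega⟩, hterm_hi⟩
      rwa [Finset.sum_const_zero] at h
    rw [Finset.sum_add_distrib, hbal, hbal2] at hsum_pos
    norm_num at hsum_pos
  -- conclusion from constancy of uu
  have hθ : ∀ a : ℕ, a < n → θ a = m + 2 * π / n * (a : ℝ) := by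
    intro a ha
    have h1 : θ a = Theta θ n (a : ℤ) := (Theta_of_lt hn a ha).symm
    rw [h1, show Theta θ n (a : ℤ) = uu θ n (a : ℤ) + 2 * π / n * ((a : ℤ) : ℝ) from by
      rw [uu]; ring, hconst a ha]
    push_cast
    ring
  constructor
  · intro j hj
    rw [hθ (j + 1) hj, hθ j (by omega)]
    push_cast
    ring
  · rw [hθ (n - 1) (by omega), hθ 0 (by omega)]
    have e : ((n - 1 : ℕ) : ℝ) = (n : ℝ) - 1 := by
      push_cast [Nat.cast_sub (by omega : 1 ≤ n)]; ring
    rw [e]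
    field_simp
    ring
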